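/- Every symmetric unitary matrix U (i.e. U unitary with Uᵀ = U) can be written as U = VᵀV for some unitary matrix V. -/

import Mathlib

open Matrix

section aux
open Polynomial
open scoped Matrix.Norms.L2Operator
variable {N : ℕ}
noncomputable local instance : CStarAlgebra (Matrix (Fin N) (Fin N) ℂ) := Matrix.instCStarAlgebra

theorem takagi_aux (U : Matrix (Fin N) (Fin N) ℂ)
    (hU : U ∈ Matrix.unitaryGroup (Fin N) ℂ) :
    ∃ q : Polynomial ℂ, Polynomial.aeval U q ∈ Matrix.unitaryGroup (Fin N) ℂ ∧
      Polynomial.aeval U q * Polynomial.aeval U q = U := by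
  classical
  have hnormal : IsStarNormal U :=
    ⟨(Unitary.mem_iff.mp hU).1.trans (Unitary.mem_iff.mp hU).2.symm⟩
  have hfin : (spectrum ℂ U).Finite := U.finite_spectrum
  have hcirc : spectrum ℂ U ⊆ Metric.sphere 0 1 := spectrum.subset_circle_of_unitary hU
  set s : ℂ → ℂ := fun z => z ^ (1/2 : ℂ) with hs
  have hz1 : ∀ z ∈ spectrum ℂ U, ‖z‖ = 1 := by
    intro z hz
    have := hcirc hz
    simpa using this
  have hzne : ∀ z ∈ spectrum ℂ U, z ≠ 0 := by
    intro z hz h0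
    have := hz1 z hz
    rw [h0] at this
    simp at this
  have hsq : ∀ z ∈ spectrum ℂ U, s z * s z = z := by
    intro z hz
    rw [hs]
    simp only
    rw [← Complex.cpow_add _ _ (hzne z hz)]
    norm_num
  have habs : ∀ z ∈ spectrum ℂ U, ‖s z‖ = 1 := by
    intro z hz
    rw [hs]
    simp only
    rw [Complex.norm_cpow_of_ne_zero (hzne z hz)]
    simp [hz1 z hz]
  have hstar : ∀ z ∈ spectrum ℂ U, (starRingEnd ℂ) (s z) * s z = 1 := by
    intro z hz
    rw [mul_comm, Complex.mul_conj, Complex.normSq_eq_norm_sq, habs z hz]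
    norm_num
  set t := hfin.toFinset with ht
  set q := Lagrange.interpolate t id s with hq
  have hqs : ∀ z ∈ spectrum ℂ U, q.eval z = s z := by
    intro z hz
    have := Lagrange.eval_interpolate_at_node s (Set.injOn_id _) (hfin.mem_toFinset.mpr hz)
    simpa [hq] using this
  have hcfc : Polynomial.aeval U q = cfc (fun z => q.eval z) U := (cfc_polynomial q U).symm
  have hmul : Polynomial.aeval U q * Polynomial.aeval U q = U := by
    rw [hcfc, ← cfc_mul _ _ U]
    rw [cfc_congr (g := id) (fun z hz => by simp [hqs z hz, hsq z hz])]
    exact cfc_id ℂ U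
  refine ⟨q, Unitary.mem_iff.mpr ⟨?_, ?_⟩, hmul⟩
  · rw [hcfc, ← cfc_star, ← cfc_mul _ _ U]
    rw [cfc_congr (g := 1) (fun z hz => by simpa [hqs z hz] using hstar z hz)]
    exact cfc_one ℂ U
  · rw [hcfc, ← cfc_star, ← cfc_mul _ _ U]
    rw [cfc_congr (g := 1) (fun z hz => by
      have := hstar z hz
      simp only [hqs z hz]
      simpa [mul_comm] using this)]
    exact cfc_one ℂ U

end aux

lemma aeval_transpose {N : ℕ} (U : Matrix (Fin N) (Fin N) ℂ) (q : Polynomial ℂ) :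
    (Polynomial.aeval U q)ᵀ = Polynomial.aeval Uᵀ q := by
  induction q using Polynomial.induction_on' with
  | add p r hp hr => simp [map_add, Matrix.transpose_add, hp, hr]
  | monomial n a =>
      simp [Polynomial.aeval_monomial, Algebra.algebraMap_eq_smul_one,
        Matrix.transpose_mul, Matrix.transpose_pow, Matrix.transpose_smul,
        Matrix.transpose_one, smul_mul_assoc, mul_smul_comm]

/-- Autonne–Takagi factorization: every symmetric unitary matrix `U` can be
written as `U = Vᵀ V` for some unitary `V`. -/
theorem stmt_15 (N : ℕ) (U : Matrix (Fin N) (Fin N) ℂ)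
    (hU : U ∈ Matrix.unitaryGroup (Fin N) ℂ) (hsym : Uᵀ = U) :
    ∃ V : Matrix (Fin N) (Fin N) ℂ,
      V ∈ Matrix.unitaryGroup (Fin N) ℂ ∧ U = Vᵀ * V := by
  obtain ⟨q, hmem, hmul⟩ := takagi_aux U hU
  refine ⟨Polynomial.aeval U q, hmem, ?_⟩
  rw [aeval_transpose, hsym, hmul]
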